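/- If a switching flow x exists for (G, o, d), then the run terminates and its run profile x(G,o,d) satisfies x(G,o,d)(e) ≤ x(e) for every edge e (the run profile is a componentwise lower bound for every switching flow). -/

import Mathlib

open scoped Classical

/-- A switch graph: every vertex has an even successor `s0 v` and an odd successor `s1 v`. -/
structure SwitchGraph (V : Type) where
  s0 : V → V
  s1 : V → V

namespace SwitchGraph

variable {V : Type}

/-- The successor of `v` along the edge of parity `b` (`false` = even, `true` = odd). -/
def succ (G : SwitchGraph V) (v : V) (b : Bool) : V :=
  if b then G.s1 v else G.s0 v

/-- One step of the run: move to the currently active successor and flip the switch. -/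
def step [DecidableEq V] (G : SwitchGraph V) (p : V × (V → Bool)) : V × (V → Bool) :=
  (G.succ p.1 (p.2 p.1), Function.update p.2 p.1 (!p.2 p.1))

/-- The state of the run after `n` steps, starting at `o` with all switches even,
stopping (freezing) upon reaching `d`. -/
def run [DecidableEq V] (G : SwitchGraph V) (o d : V) (n : ℕ) : V × (V → Bool) :=
  (fun p => if p.1 = d then p else G.step p)^[n] (o, fun _ => false)

/-- The run from `o` terminates at `d`. -/
def Terminates [DecidableEq V] (G : SwitchGraph V) (o d : V) : Prop :=
  ∃ n, (G.run o d n).1 = d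

/-- Number of traversals of the outgoing edge of `v` of parity `b` during
the first `N` steps of the run. -/
def traversals [DecidableEq V] (G : SwitchGraph V) (o d : V) (N : ℕ) (v : V) (b : Bool) : ℕ :=
  ((Finset.range N).filter
    (fun n => (G.run o d n).1 = v ∧ v ≠ d ∧ (G.run o d n).2 v = b)).card

/-- Total weight on edges leaving `v`. -/
def outflow {M : Type} [AddCommMonoid M] (x : V → Bool → M) (v : V) : M :=
  x v false + x v true

/-- Total weight on edges entering `v`. -/
def inflow [Fintype V] [DecidableEq V] (G : SwitchGraph V) {M : Type} [AddCommMonoid M]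
    (x : V → Bool → M) (v : V) : M :=
  ∑ u : V, ∑ b : Bool, if G.succ u b = v then x u b else 0

/-- A switching flow: flow conservation of value 1 from `o` to `d`, together with the
balancing condition `x v true ≤ x v false ≤ x v true + 1` at every vertex. -/
def IsSwitchingFlow [Fintype V] [DecidableEq V] (G : SwitchGraph V) (o d : V)
    (x : V → Bool → ℕ) : Prop :=
  (∀ v, outflow x v + (if v = d then 1 else 0) = G.inflow x v + (if v = o then 1 else 0)) ∧
  (∀ v, x v true ≤ x v false ∧ x v false ≤ x v true + 1)

/-- The edge relation of the underlying directed graph `(V, E)`. -/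
def stepRel (G : SwitchGraph V) (a b : V) : Prop :=
  G.s0 a = b ∨ G.s1 a = b

/-- A dead end: a vertex with no directed path to `d` in `(V, E)`. -/
def DeadEnd (G : SwitchGraph V) (d w : V) : Prop :=
  ¬ Relation.ReflTransGen G.stepRel w d

/-- There is a directed walk of length `k` from `w` to `d` in `(V, E)`. -/
def Chain (G : SwitchGraph V) (w d : V) (k : ℕ) : Prop :=
  ∃ f : ℕ → V, f 0 = w ∧ f k = d ∧ ∀ i < k, G.stepRel (f i) (f (i + 1))

end SwitchGraph

open SwitchGraph

set_option linter.unusedSectionVars false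
section Aux

variable {V : Type} [Fintype V] [DecidableEq V] (G : SwitchGraph V) (o d : V)

private lemma run_succ' (n : ℕ) :
    G.run o d (n+1) = if (G.run o d n).1 = d then G.run o d n else G.step (G.run o d n) := by
  simp [SwitchGraph.run, Function.iterate_succ_apply']
  rfl

private lemma sw_succ (n : ℕ) (v : V) :
    (G.run o d (n+1)).2 v =
      if (G.run o d n).1 = v ∧ v ≠ d then !((G.run o d n).2 v) else (G.run o d n).2 v := by
  rw [run_succ']
  by_cases h : (G.run o d n).1 = d
  · have h' : ¬((G.run o d n).1 = v ∧ v ≠ d) := by rintro ⟨h1, h2⟩; exact h2 (h1 ▸ h)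
    rw [if_pos h, if_neg h']
  · simp only [h, if_false, SwitchGraph.step, Function.update_apply]
    by_cases h2 : (G.run o d n).1 = v
    · have hv : v ≠ d := h2 ▸ h
      simp [h2, hv]
    · have : ¬ (v = (G.run o d n).1) := fun hh => h2 hh.symm
      simp [h2, this]

private lemma pos_succ (n : ℕ) :
    (G.run o d (n+1)).1 =
      if (G.run o d n).1 = d then d
      else G.succ (G.run o d n).1 ((G.run o d n).2 (G.run o d n).1) := by
  rw [run_succ']
  by_cases h : (G.run o d n).1 = d <;> simp [h, SwitchGraph.step]

private lemma trav_succ (N : ℕ) (v : V) (b : Bool) :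
    G.traversals o d (N+1) v b = G.traversals o d N v b +
      (if (G.run o d N).1 = v ∧ v ≠ d ∧ (G.run o d N).2 v = b then 1 else 0) := by
  unfold SwitchGraph.traversals
  rw [Finset.range_add_one, Finset.filter_insert]
  split
  · rw [Finset.card_insert_of_notMem (by simp)]
  · omega

private lemma trav_zero (v : V) (b : Bool) : G.traversals o d 0 v b = 0 := by
  simp [SwitchGraph.traversals]

private lemma balance (N : ℕ) (v : V) :
    G.traversals o d N v false =
      G.traversals o d N v true + (if (G.run o d N).2 v then 1 else 0) := by
  induction N with
  | zero => simp [trav_zero, SwitchGraph.run]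
  | succ N ih =>
    rw [trav_succ, trav_succ, sw_succ]
    by_cases h : (G.run o d N).1 = v ∧ v ≠ d
    · cases hb : (G.run o d N).2 v <;> simp [h, hb, ih]
    · have h1 : ¬((G.run o d N).1 = v ∧ v ≠ d ∧ (G.run o d N).2 v = false) := by tauto
      have h2 : ¬((G.run o d N).1 = v ∧ v ≠ d ∧ (G.run o d N).2 v = true) := by tauto
      rw [if_neg h1, if_neg h2, if_neg h, add_zero, add_zero]
      exact ih

private lemma occ_eq_D (N : ℕ) (v : V) (hv : v ≠ d) :
    ((Finset.range N).filter (fun n => (G.run o d n).1 = v)).card =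
      G.traversals o d N v false + G.traversals o d N v true := by
  induction N with
  | zero => simp [trav_zero]
  | succ N ih =>
    rw [trav_succ, trav_succ, Finset.range_add_one, Finset.filter_insert]
    by_cases h : (G.run o d N).1 = v
    · rw [if_pos h, Finset.card_insert_of_notMem (by simp)]
      cases hb : (G.run o d N).2 v
      · rw [if_pos ⟨h, hv, rfl⟩, if_neg (by simp)]; omega
      · rw [if_neg (by simp), if_pos ⟨h, hv, rfl⟩]; omega
    · rw [if_neg h, if_neg (by tauto), if_neg (by tauto)]; omega

private lemma new_sum (N : ℕ) (v : V) :
    (∑ u : V, ∑ b : Bool,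
      if G.succ u b = v then
        (if (G.run o d N).1 = u ∧ u ≠ d ∧ (G.run o d N).2 u = b then 1 else 0) else 0) =
    if (G.run o d N).1 ≠ d ∧
        G.succ ((G.run o d N).1) ((G.run o d N).2 (G.run o d N).1) = v then 1 else (0:ℕ) := by
  by_cases hd : (G.run o d N).1 = d
  · have : ∀ u : V, ∀ b : Bool, (if G.succ u b = v then
        (if (G.run o d N).1 = u ∧ u ≠ d ∧ (G.run o d N).2 u = b then 1 else 0) else (0:ℕ)) = 0 := by
      intro u b
      have : ¬((G.run o d N).1 = u ∧ u ≠ d ∧ (G.run o d N).2 u = b) := by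
        rintro ⟨h1, h2, _⟩; exact h2 (h1 ▸ hd)
      simp [this]
    simp only [this, Finset.sum_const_zero]
    rw [if_neg (by simp [hd])]
  · set u0 := (G.run o d N).1 with hu0
    set b0 := (G.run o d N).2 u0 with hb0
    have hkey : ∀ u : V, ∀ b : Bool, (if G.succ u b = v then
        (if (G.run o d N).1 = u ∧ u ≠ d ∧ (G.run o d N).2 u = b then 1 else 0) else (0:ℕ)) =
        if u = u0 ∧ b = b0 ∧ G.succ u0 b0 = v then 1 else 0 := by
      intro u b
      by_cases h1 : u = u0
      · by_cases h2 : b = b0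
        · subst h1; subst h2
          by_cases h3 : G.succ u0 b0 = v
          · simp [h3, hd, hu0.symm, hb0.symm]
          · simp [h3]
        · subst h1
          have hne : ¬((G.run o d N).1 = u0 ∧ u0 ≠ d ∧ (G.run o d N).2 u0 = b) := by
            rintro ⟨_, _, hc⟩
            exact h2 (hb0.trans hc).symm
          simp only [hne, if_false, ite_self, h2, and_false, false_and, if_false]
      · have : ¬((G.run o d N).1 = u ∧ u ≠ d ∧ (G.run o d N).2 u = b) := by
          rintro ⟨ha, _, _⟩; exact h1 ha.symm
        simp [this, h1]
    simp only [← hu0] at hkey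
    simp only [hkey]
    simp only [ite_and]
    have hone : ∀ x : V, (∑ x_1 : Bool, if x = u0 then if x_1 = b0 then
        (if G.succ u0 b0 = v then (1:ℕ) else 0) else 0 else 0) =
        if x = u0 then (if G.succ u0 b0 = v then (1:ℕ) else 0) else 0 := by
      intro x
      by_cases h : x = u0 <;> simp [h, Finset.sum_ite_eq']
    rw [Finset.sum_congr rfl fun x _ => hone x,
      Finset.sum_ite_eq' Finset.univ u0 (fun _ => if G.succ u0 b0 = v then (1:ℕ) else 0),
      if_pos (Finset.mem_univ u0), if_pos hd]

private lemma occ_eq (N : ℕ) (v : V) (hv : v ≠ d) :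
    ((Finset.range (N+1)).filter (fun n => (G.run o d n).1 = v)).card =
      (if o = v then 1 else 0) +
      ∑ u : V, ∑ b : Bool, if G.succ u b = v then G.traversals o d N u b else 0 := by
  induction N with
  | zero =>
    simp only [trav_zero]
    have : (G.run o d 0).1 = o := rfl
    simp [Finset.filter_singleton, this]
    by_cases h : o = v <;> simp [h]
  | succ N ih =>
    rw [Finset.range_add_one, Finset.filter_insert]
    have hrhs : (∑ u : V, ∑ b : Bool, if G.succ u b = v then G.traversals o d (N+1) u b else 0) =
        (∑ u : V, ∑ b : Bool, if G.succ u b = v then G.traversals o d N u b else 0) +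
        (∑ u : V, ∑ b : Bool, if G.succ u b = v then
          (if (G.run o d N).1 = u ∧ u ≠ d ∧ (G.run o d N).2 u = b then 1 else 0) else 0) := by
      rw [← Finset.sum_add_distrib]
      refine Finset.sum_congr rfl fun u _ => ?_
      rw [← Finset.sum_add_distrib]
      refine Finset.sum_congr rfl fun b _ => ?_
      rw [trav_succ]
      split <;> simp
    rw [hrhs, new_sum]
    have hpos : ((G.run o d (N+1)).1 = v) ↔
        ((G.run o d N).1 ≠ d ∧ G.succ ((G.run o d N).1) ((G.run o d N).2 (G.run o d N).1) = v) := by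
      rw [pos_succ]
      by_cases h : (G.run o d N).1 = d
      · simp [h, hv.symm]
      · simp [h]
    by_cases h : (G.run o d (N+1)).1 = v
    · rw [if_pos h, Finset.card_insert_of_notMem (by simp), ih, if_pos (hpos.mp h)]
      omega
    · rw [if_neg h, if_neg (fun hc => h (hpos.mpr hc)), ih]
      omega

private lemma invariant (hod : o ≠ d) (x : V → Bool → ℕ) (hx : G.IsSwitchingFlow o d x) :
    ∀ N v b, G.traversals o d N v b ≤ x v b := by
  intro N
  induction N with
  | zero => intro v b; simp [trav_zero]
  | succ N ih =>
    intro v b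
    rw [trav_succ]
    by_cases h : (G.run o d N).1 = v ∧ v ≠ d ∧ (G.run o d N).2 v = b
    · obtain ⟨h1, h2, h3⟩ := h
      rw [if_pos ⟨h1, h2, h3⟩]
      by_contra hc
      push_neg at hc
      have ht : G.traversals o d N v b = x v b := le_antisymm (ih v b) (by omega)
      -- occupancy identity
      have key := occ_eq G o d N v h2
      have keyD := occ_eq_D G o d N v h2
      have hsplit : ((Finset.range (N+1)).filter (fun n => (G.run o d n).1 = v)).card =
          ((Finset.range N).filter (fun n => (G.run o d n).1 = v)).card + 1 := by
        rw [Finset.range_add_one, Finset.filter_insert, if_pos h1,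
          Finset.card_insert_of_notMem (by simp)]
      have hT : (∑ u : V, ∑ b : Bool, if G.succ u b = v then G.traversals o d N u b else 0) ≤
          G.inflow x v := by
        unfold SwitchGraph.inflow
        refine Finset.sum_le_sum fun u _ => Finset.sum_le_sum fun c _ => ?_
        split
        · exact ih u c
        · exact le_refl 0
      have hcons := hx.1 v
      have hbalx := hx.2 v
      have hbal := balance G o d N v
      -- turn conservation into usable nat facts
      rw [if_neg h2] at hcons
      have hD : G.traversals o d N v false + G.traversals o d N v true + 1 ≤
          SwitchGraph.outflow x v := by
        by_cases ho : v = o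
        · subst ho
          rw [if_pos rfl] at hcons
          rw [if_pos rfl] at key
          omega
        · rw [if_neg ho] at hcons
          rw [if_neg (fun hh => ho hh.symm)] at key
          omega
      unfold SwitchGraph.outflow at hD
      cases b
      · -- switch was false: t false = t true
        rw [h3, if_neg (by simp)] at hbal
        omega
      · rw [h3, if_pos rfl] at hbal
        omega
    · rw [if_neg h, add_zero]
      exact ih v b

private lemma total_succ (N : ℕ) (h : (G.run o d N).1 ≠ d) :
    (∑ v : V, ∑ b : Bool, G.traversals o d (N+1) v b) =
      (∑ v : V, ∑ b : Bool, G.traversals o d N v b) + 1 := by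
  have hsum : (∑ v : V, ∑ b : Bool, G.traversals o d (N+1) v b) =
      (∑ v : V, ∑ b : Bool, G.traversals o d N v b) +
      (∑ v : V, ∑ b : Bool,
        if (G.run o d N).1 = v ∧ v ≠ d ∧ (G.run o d N).2 v = b then 1 else 0) := by
    rw [← Finset.sum_add_distrib]
    refine Finset.sum_congr rfl fun v _ => ?_
    rw [← Finset.sum_add_distrib]
    exact Finset.sum_congr rfl fun b _ => trav_succ G o d N v b
  rw [hsum]
  congr 1
  set u0 := (G.run o d N).1 with hu0
  set b0 := (G.run o d N).2 u0 with hb0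
  have hkey : ∀ v : V, ∀ b : Bool,
      (if (G.run o d N).1 = v ∧ v ≠ d ∧ (G.run o d N).2 v = b then (1:ℕ) else 0) =
      if v = u0 ∧ b = b0 then 1 else 0 := by
    intro v b
    by_cases h1 : v = u0
    · subst h1
      by_cases h2 : b = b0
      · subst h2
        rw [if_pos ⟨rfl, h, hb0.symm⟩, if_pos ⟨rfl, rfl⟩]
      · rw [if_neg (by rintro ⟨_, _, hc⟩; exact h2 (hb0.trans hc).symm),
          if_neg (by rintro ⟨_, hc⟩; exact h2 hc)]
    · rw [if_neg (by rintro ⟨ha, _, _⟩; exact h1 ha.symm),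
        if_neg (by rintro ⟨ha, _⟩; exact h1 ha)]
  simp only [← hu0] at hkey
  simp only [hkey, ite_and]
  have hone : ∀ v : V, (∑ b : Bool, if v = u0 then (if b = b0 then (1:ℕ) else 0) else 0) =
      if v = u0 then 1 else 0 := by
    intro v
    by_cases hv : v = u0 <;> simp [hv, Finset.sum_ite_eq']
  rw [Finset.sum_congr rfl fun v _ => hone v,
    Finset.sum_ite_eq' Finset.univ u0 (fun _ => (1:ℕ)), if_pos (Finset.mem_univ u0)]

private lemma terminates (hod : o ≠ d) (x : V → Bool → ℕ) (hx : G.IsSwitchingFlow o d x) :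
    G.Terminates o d := by
  by_contra hterm
  unfold SwitchGraph.Terminates at hterm
  push_neg at hterm
  set M := ∑ v : V, ∑ b : Bool, x v b with hM
  have htot : ∀ N, (∑ v : V, ∑ b : Bool, G.traversals o d N v b) = N := by
    intro N
    induction N with
    | zero => simp [trav_zero]
    | succ N ih => rw [total_succ G o d N (hterm N), ih]
  have hle : (∑ v : V, ∑ b : Bool, G.traversals o d (M+1) v b) ≤ M := by
    rw [hM]
    exact Finset.sum_le_sum fun v _ => Finset.sum_le_sum fun b _ =>
      invariant G o d hod x hx (M+1) v b
  rw [htot] at hle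
  omega

end Aux

open SwitchGraph

/-- If a switching flow `x` exists, the run terminates and its run profile is bounded
componentwise by `x`. -/
theorem stmt5 {V : Type} [Fintype V] [DecidableEq V] (G : SwitchGraph V) (o d : V)
    (hod : o ≠ d) (x : V → Bool → ℕ) (hx : G.IsSwitchingFlow o d x) :
    G.Terminates o d ∧
      ∀ N, (G.run o d N).1 = d → ∀ v b, G.traversals o d N v b ≤ x v b :=
  ⟨terminates G o d hod x hx, fun N _ v b => invariant G o d hod x hx N v b⟩
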